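/- Let n = 4k, a_1 a nonsquare in F_{3^n}, and c ∈ F_{3^n}^* satisfying c^{2·3^k(3^{2k}-1)} = -a_2^{-(3^{2k}-1)} where a_2 satisfies a_2^{3^{2k}-1} = (-1)^k a_1^{(3^k+1)(3^{2k}-1)/2}. Then a_1^{3^{2k}-1} c^{2(3^k+1)(3^{2k}-1)} = -1; equivalently, the relative trace from F_{3^n} to F_{3^{2k}} of a_1 c^{2(3^k+1)} is zero. -/

import Mathlib

theorem trace_of_a1_c_vanishes
    (k : ℕ) (hk : 0 < k) (n : ℕ) (hn : n = 4 * k)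
    (F : Type*) [Field F] [Fintype F] (hF : Fintype.card F = 3 ^ n)
    (a₁ : F) (ha₁ : a₁ ^ ((3 ^ n - 1) / 2) = -1)
    (a₂ : F) (ha₂0 : a₂ ≠ 0)
    (ha₂ : a₂ ^ (3 ^ (2 * k) - 1) = (-1 : F) ^ k * a₁ ^ ((3 ^ k + 1) * (3 ^ (2 * k) - 1) / 2))
    (c : F) (hc : c ≠ 0)
    (hceq : c ^ (2 * 3 ^ k * (3 ^ (2 * k) - 1)) = -(a₂⁻¹) ^ (3 ^ (2 * k) - 1)) :
    a₁ ^ (3 ^ (2 * k) - 1) * c ^ (2 * (3 ^ k + 1) * (3 ^ (2 * k) - 1)) = -1 ∧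
    a₁ * c ^ (2 * (3 ^ k + 1)) + (a₁ * c ^ (2 * (3 ^ k + 1))) ^ (3 ^ (2 * k)) = 0 := by
  subst hn
  have hqodd : Odd ((3:ℕ)^k) := Odd.pow ⟨1, by norm_num⟩
  have hQodd : Odd ((3:ℕ)^(2*k)) := Odd.pow ⟨1, by norm_num⟩
  obtain ⟨e, hQe⟩ := hQodd
  have hQ9 : (9:ℕ) ≤ 3^(2*k) := by
    calc (9:ℕ) = 3^2 := by norm_num
    _ ≤ 3^(2*k) := Nat.pow_le_pow_right (by norm_num) (by omega)
  set q : ℕ := 3^k with hq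
  set Q : ℕ := 3^(2*k) with hQ
  have hq2 : q*q = Q := by rw [hq, hQ, ← pow_add, two_mul]
  have hN : (3:ℕ)^(4*k) = Q*Q := by rw [hQ, ← pow_add]; congr 1; ring
  set D : ℕ := Q - 1 with hDdef
  have hD : Q = D + 1 := by omega
  have hDe : D = 2*e := by omega
  have he1 : 1 ≤ e := by omega
  -- rewrite the half exponents
  have hexp : ((3:ℕ)^(4*k) - 1)/2 = 2*(e*e) + 2*e := by
    rw [hN, hD, hDe,
      show (2*e+1)*(2*e+1) = 2*(2*(e*e)+2*e)+1 from by ring,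
      Nat.add_sub_cancel, Nat.mul_div_cancel_left _ (by norm_num)]
  have hexp2 : (q+1)*D/2 = (q+1)*e := by
    rw [hDe, show (q+1)*(2*e) = 2*((q+1)*e) from by ring,
      Nat.mul_div_cancel_left _ (by norm_num)]
  rw [hexp] at ha₁
  rw [hexp2] at ha₂
  have ha₁0 : a₁ ≠ 0 := by
    intro h
    rw [h, zero_pow (Nat.add_pos_right _ (by omega)).ne'] at ha₁
    exact (neg_ne_zero.mpr one_ne_zero) ha₁.symm
  have hM : Q*Q - 1 = D*(D+2) := by
    rw [hD, show (D+1)*(D+1) = D*(D+2)+1 from by ring, Nat.add_sub_cancel]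
  have hcard : Fintype.card F = Q*Q := by rw [hF, hN]
  have hc1 : c ^ (Q*Q-1) = 1 := by
    rw [← hcard]; exact FiniteField.pow_card_sub_one_eq_one c hc
  -- Step B : raise hceq to the q-th power
  have hB : c ^ (2*Q*D) = -((a₂ ^ (q*D))⁻¹) := by
    have h1 : c ^ (2*Q*D) = (c ^ (2*q*D))^q := by
      rw [← pow_mul]; congr 1; rw [← hq2]; ring
    rw [h1, hceq, hqodd.neg_pow, inv_pow, inv_pow, ← pow_mul, mul_comm D q]
  -- Step C
  have hCC : c ^ (2*Q*D) * c ^ (2*D) = 1 := by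
    rw [← pow_add, show 2*Q*D + 2*D = (Q*Q-1)*2 from by rw [hM, hD]; ring,
      pow_mul, hc1, one_pow]
  have hC : c ^ (2*D) = -(a₂ ^ (q*D)) := by
    rw [hB] at hCC
    have h3 := inv_eq_of_mul_eq_one_right hCC
    rw [inv_neg, inv_inv] at h3
    exact h3.symm
  -- sign lemma
  have hs : ((-1:F)^k)^q = (-1)^k := by
    rcases Nat.even_or_odd k with hk2 | hk2
    · rw [hk2.neg_one_pow, one_pow]
    · rw [hk2.neg_one_pow, hqodd.neg_pow, one_pow]
  -- key natural number identity
  have hkey : D + (q+1)*e*q = (q+1)*e + (2*(e*e)+2*e) := by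
    rw [hDe, show (q+1)*e*q = e*(q*q) + e*q from by ring, hq2, hQe]
    ring
  -- Goal 1
  have goal1 : a₁ ^ D * c ^ (2*(q+1)*D) = -1 := by
    have hsplit : c ^ (2*(q+1)*D) = c ^ (2*q*D) * c ^ (2*D) := by
      rw [← pow_add]; congr 1; ring
    have hqD : a₂ ^ (q*D) = (-1:F)^k * a₁ ^ ((q+1)*e*q) := by
      rw [mul_comm q D, pow_mul, ha₂, mul_pow, hs, ← pow_mul]
    rw [hsplit, hceq, inv_pow, hC, ha₂, hqD, neg_mul_neg]
    have hA : a₁ ^ ((q+1)*e) ≠ 0 := pow_ne_zero _ ha₁0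
    have hs0 : ((-1:F)^k) ≠ 0 := pow_ne_zero _ (neg_ne_zero.mpr one_ne_zero)
    have hmain : a₁ ^ D * a₁ ^ ((q+1)*e*q) = -(a₁ ^ ((q+1)*e)) := by
      rw [← pow_add, hkey, pow_add, ha₁, mul_neg_one]
    field_simp
    linear_combination hmain
  refine ⟨goal1, ?_⟩
  -- Goal 2
  have hx : (a₁ * c ^ (2*(q+1))) ^ Q = -(a₁ * c ^ (2*(q+1))) := by
    rw [hD, pow_succ]
    have hxD : (a₁ * c ^ (2*(q+1))) ^ D = -1 := by
      rw [mul_pow, ← pow_mul, mul_comm (2*(q+1)) D, mul_comm D (2*(q+1))]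
      exact goal1
    rw [hxD, neg_one_mul]
  rw [hx, add_neg_cancel]
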